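/- Let φ : ℝ → ℝ be a monotone decreasing nonnegative function such that for some constants C₀ > 0, δ > 0, s₀ ∈ ℝ, and for all s ≥ s₀ and all t > 0 we have t·φ(s+t) ≤ C₀·φ(s)^(1+δ). Then φ(s) = 0 for every s ≥ s₀ + 2C₀·φ(s₀)^δ/(1 - 2^(-δ)). -/

import Mathlib

/-- De Giorgi's iteration lemma. -/
theorem deGiorgi_lemma (φ : ℝ → ℝ) (hmono : Antitone φ) (hnonneg : ∀ s, 0 ≤ φ s)
    (C₀ δ s₀ : ℝ) (hC₀ : 0 < C₀) (hδ : 0 < δ)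
    (hiter : ∀ s ≥ s₀, ∀ t > 0, t * φ (s + t) ≤ C₀ * (φ s) ^ (1 + δ)) :
    ∀ s ≥ s₀ + 2 * C₀ * (φ s₀) ^ δ / (1 - 2 ^ (-δ)), φ s = 0 := by
  intro s hs
  set M := φ s₀ with hMdef
  rcases eq_or_lt_of_le (hnonneg s₀) with h0 | hMpos
  · -- degenerate case φ s₀ = 0
    have hMz : M = 0 := h0.symm
    have hz : (2 : ℝ) * C₀ * M ^ δ / (1 - 2 ^ (-δ)) = 0 := by
      rw [hMz, Real.zero_rpow hδ.ne']; simp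
    have hs' : s₀ ≤ s := by rw [hz, add_zero] at hs; exact hs
    exact le_antisymm (hMz ▸ hmono hs') (hnonneg s)
  · -- main case φ s₀ > 0
    set K : ℝ := 1 - 2 ^ (-δ) with hKdef
    have h2lt : (2 : ℝ) ^ (-δ) < 1 :=
      Real.rpow_lt_one_of_one_lt_of_neg one_lt_two (neg_neg_of_pos hδ)
    have hK : 0 < K := by simp [hKdef]; linarith
    set d : ℝ := 2 * C₀ * M ^ δ / K with hddef
    have hMδ : (0 : ℝ) < M ^ δ := Real.rpow_pos_of_pos hMpos δ
    have hd : 0 < d := by positivity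
    have hdK : d * K = 2 * C₀ * M ^ δ := div_mul_cancel₀ _ hK.ne'
    set a : ℕ → ℝ := fun n => s₀ + d * (1 - 2 ^ (-δ * (n : ℝ))) with hadef
    have hexp_le : ∀ n : ℕ, (2 : ℝ) ^ (-δ * (n : ℝ)) ≤ 1 := fun n =>
      Real.rpow_le_one_of_one_le_of_nonpos one_le_two
        (by have : (0:ℝ) ≤ (n:ℝ) := Nat.cast_nonneg n; nlinarith)
    have hexp_pos : ∀ x : ℝ, (0:ℝ) < (2:ℝ) ^ x := fun x => Real.rpow_pos_of_pos two_pos x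
    have hA : ∀ n, s₀ ≤ a n := by
      intro n
      have := hexp_le n
      have := (hexp_pos (-δ * (n:ℝ))).le
      simp only [hadef]
      nlinarith
    have hA' : ∀ n, a n ≤ s₀ + d := by
      intro n
      have := (hexp_pos (-δ * (n:ℝ))).le
      simp only [hadef]
      nlinarith
    have key : ∀ n : ℕ, φ (a n) ≤ M * 2 ^ (-(n : ℝ)) := by
      intro n
      induction n with
      | zero => simp [hadef]; exact le_rfl
      | succ n ih =>
        set t : ℝ := d * 2 ^ (-δ * (n : ℝ)) * K with htdef
        have ht : 0 < t := by positivity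
        have h2 : (2:ℝ) ^ (-δ * (n:ℝ)) * 2 ^ (-δ) = 2 ^ (-δ * ((n:ℝ) + 1)) := by
          rw [← Real.rpow_add two_pos]; congr 1; ring
        have hstep : a n + t = a (n + 1) := by
          simp only [hadef, htdef, hKdef]
          push_cast
          rw [← h2]; ring
        have h1 := hiter (a n) (hA n) t ht
        rw [hstep] at h1
        have h2' : C₀ * (φ (a n)) ^ (1 + δ) ≤ C₀ * (M * 2 ^ (-(n : ℝ))) ^ (1 + δ) :=
          mul_le_mul_of_nonneg_left
            (Real.rpow_le_rpow (hnonneg _) ih (by positivity)) hC₀.le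
        have heq : C₀ * (M * 2 ^ (-(n : ℝ))) ^ (1 + δ) = t * (M * 2 ^ (-((n : ℝ) + 1))) := by
          rw [Real.mul_rpow hMpos.le (hexp_pos _).le,
              Real.rpow_add hMpos, Real.rpow_one,
              ← Real.rpow_mul (by norm_num : (0:ℝ) ≤ 2)]
          simp only [htdef, hddef]
          rw [div_mul_eq_mul_div, div_mul_eq_mul_div, mul_div_assoc,
              div_self hK.ne', mul_one]
          have h3 : (2:ℝ) ^ (-δ * (n:ℝ)) * (2:ℝ) ^ (-((n:ℝ)+1)) = (2:ℝ) ^ (-(n:ℝ) * (1 + δ)) / 2 := by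
            rw [← Real.rpow_add two_pos,
                show -δ * (n:ℝ) + -((n:ℝ)+1) = -(n:ℝ) * (1+δ) + (-1) by ring,
                Real.rpow_add two_pos, Real.rpow_neg_one]
            ring
          linear_combination (-2 * C₀ * M * M ^ δ) * h3
        have h4 : t * φ (a (n + 1)) ≤ t * (M * 2 ^ (-((n : ℝ) + 1))) := by
          calc t * φ (a (n+1)) ≤ C₀ * (M * 2 ^ (-(n : ℝ))) ^ (1 + δ) := h1.trans h2'
          _ = t * (M * 2 ^ (-((n : ℝ) + 1))) := heq
        have := le_of_mul_le_mul_left h4 ht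
        push_cast at this ⊢
        linarith
    -- pass to the limit
    have hφs : ∀ n : ℕ, φ s ≤ M * 2 ^ (-(n : ℝ)) := by
      intro n
      have h5 : a n ≤ s := (hA' n).trans hs
      exact (hmono h5).trans (key n)
    have h2n : ∀ n : ℕ, M * (2:ℝ) ^ (-(n : ℝ)) = M * (1/2 : ℝ) ^ n := by
      intro n
      rw [Real.rpow_neg (by norm_num : (0:ℝ) ≤ 2), Real.rpow_natCast]
      rw [one_div, inv_pow]
    have hlim : Filter.Tendsto (fun n : ℕ => M * (2:ℝ) ^ (-(n : ℝ))) Filter.atTop (nhds 0) := by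
      simp only [h2n]
      have := (tendsto_pow_atTop_nhds_zero_of_lt_one (by norm_num : (0:ℝ) ≤ 1/2)
        (by norm_num : (1/2:ℝ) < 1)).const_mul M
      simpa using this
    have hle0 : φ s ≤ 0 := le_of_tendsto_of_tendsto' tendsto_const_nhds hlim hφs
    exact le_antisymm hle0 (hnonneg s)
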